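/- Let x ∈ ℝ^N with N = 2^n and WHT coefficients X[k]. Fix b < n, a binary matrix M ∈ 𝔽₂^{n×b}, and an offset d ∈ 𝔽₂ⁿ. Define the subsampled signal's B-point WHT (B = 2^b) by U[j] = √(N/B) · (1/√N) · Σ_{ℓ∈𝔽₂^b} x[Mℓ + d] (-1)^{⟨j,ℓ⟩} (up to normalization as in the paper). Then U[j] = Σ_{k : Mᵀk = j} X[k] (-1)^{⟨d,k⟩} for every j ∈ 𝔽₂^b. That is, subsampling along the coset {Mℓ+d : ℓ ∈ 𝔽₂^b} followed by a B-point WHT aliases all WHT coefficients X[k] with Mᵀk = j into bin j, each modulated by the sign (-1)^{⟨d,k⟩}. -/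

import Mathlib

open Finset

/-- Inner product over 𝔽₂, as a natural number exponent. -/
noncomputable def ip {n : ℕ} (k m : Fin n → ZMod 2) : ℕ :=
  (∑ i, k i * m i).val

lemma neg_one_pow_val_add (a c : ZMod 2) :
    ((-1 : ℝ)) ^ (a + c).val = (-1 : ℝ) ^ a.val * (-1 : ℝ) ^ c.val := by
  rw [ZMod.val_add, ← neg_one_pow_eq_pow_mod_two, pow_add]

lemma ip_comm {n : ℕ} (a c : Fin n → ZMod 2) : ip a c = ip c a := by
  unfold ip; congr 1; exact Finset.sum_congr rfl fun i _ => mul_comm _ _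

lemma ip_add_left {n : ℕ} (a c k : Fin n → ZMod 2) :
    ((-1 : ℝ)) ^ ip (a + c) k = (-1 : ℝ) ^ ip a k * (-1 : ℝ) ^ ip c k := by
  unfold ip
  have : (∑ i, (a + c) i * k i) = (∑ i, a i * k i) + (∑ i, c i * k i) := by
    rw [← Finset.sum_add_distrib]
    exact Finset.sum_congr rfl fun i _ => by simp [add_mul]
  rw [this, neg_one_pow_val_add]

lemma ip_add_right {n : ℕ} (a c k : Fin n → ZMod 2) :
    ((-1 : ℝ)) ^ ip k (a + c) = (-1 : ℝ) ^ ip k a * (-1 : ℝ) ^ ip k c := by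
  rw [ip_comm k (a+c), ip_comm k a, ip_comm k c, ip_add_left]

lemma ip_mulVec {n b : ℕ} (M : Matrix (Fin n) (Fin b) (ZMod 2))
    (ℓ : Fin b → ZMod 2) (k : Fin n → ZMod 2) :
    ip (M.mulVec ℓ) k = ip ℓ (M.transpose.mulVec k) := by
  unfold ip
  congr 1
  simp only [Matrix.mulVec, dotProduct, Matrix.transpose_apply]
  calc (∑ i, (∑ j', M i j' * ℓ j') * k i)
      = ∑ i, ∑ j', M i j' * ℓ j' * k i := by
        exact Finset.sum_congr rfl fun i _ => Finset.sum_mul _ _ _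
    _ = ∑ j', ∑ i, M i j' * ℓ j' * k i := Finset.sum_comm
    _ = ∑ j', ℓ j' * ∑ i, M i j' * k i := by
        refine Finset.sum_congr rfl fun j' _ => ?_
        rw [Finset.mul_sum]
        exact Finset.sum_congr rfl fun i _ => by ring

lemma ortho {b : ℕ} (v : Fin b → ZMod 2) :
    ∑ ℓ : Fin b → ZMod 2, ((-1 : ℝ)) ^ ip ℓ v
      = if v = 0 then (2 : ℝ) ^ b else 0 := by
  by_cases hv : v = 0
  · subst hv
    simp only [if_pos rfl]
    have h1 : ∀ ℓ : Fin b → ZMod 2, ((-1 : ℝ)) ^ ip ℓ 0 = 1 := by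
      intro ℓ; unfold ip; simp
    rw [Finset.sum_congr rfl fun ℓ _ => h1 ℓ]
    simp [Finset.card_univ]
  · rw [if_neg hv]
    obtain ⟨i0, hi0⟩ : ∃ i0, v i0 ≠ 0 := by
      by_contra h; push_neg at h; exact hv (funext fun i => h i)
    have hv1 : v i0 = 1 := by
      have hcases : ∀ u : ZMod 2, u ≠ 0 → u = 1 := by decide
      exact hcases _ hi0
    set e : Fin b → ZMod 2 := Pi.single i0 1 with he
    have hflip : ∀ ℓ : Fin b → ZMod 2,
        ((-1 : ℝ)) ^ ip (ℓ + e) v = -((-1 : ℝ)) ^ ip ℓ v := by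
      intro ℓ
      rw [ip_add_left]
      have h1 : ip e v = 1 := by
        unfold ip
        have h2 : (∑ i, e i * v i) = 1 := by
          rw [Finset.sum_eq_single i0]
          · simp [he, hv1]
          · intro i _ hne; simp [he, Pi.single_apply, hne]
          · simp
        rw [h2]; rfl
      rw [h1]; ring
    have hS : (∑ ℓ : Fin b → ZMod 2, ((-1 : ℝ)) ^ ip ℓ v)
        = ∑ ℓ : Fin b → ZMod 2, ((-1 : ℝ)) ^ ip (ℓ + e) v :=
      (Fintype.sum_equiv (Equiv.addRight e) _ _ (fun ℓ => rfl)).symm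
    rw [Finset.sum_congr rfl fun ℓ _ => hflip ℓ, Finset.sum_neg_distrib] at hS
    linarith

theorem subsampling_aliasing {n b : ℕ} (hb : b < n)
    (x X : (Fin n → ZMod 2) → ℝ)
    (hx : ∀ m, x m = (1 / Real.sqrt (2 ^ n)) *
      ∑ k : Fin n → ZMod 2, (-1 : ℝ) ^ ip m k * X k)
    (M : Matrix (Fin n) (Fin b) (ZMod 2)) (d : Fin n → ZMod 2)
    (U : (Fin b → ZMod 2) → ℝ)
    (hU : ∀ j, U j = Real.sqrt ((2 ^ n : ℝ) / (2 ^ b : ℝ)) * (1 / Real.sqrt (2 ^ n)) *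
      (Real.sqrt ((2 ^ n : ℝ) / (2 ^ b : ℝ)) * ∑ ℓ : Fin b → ZMod 2, x (M.mulVec ℓ + d) * (-1 : ℝ) ^ ip j ℓ)) :
    ∀ j, U j = ∑ k ∈ Finset.univ.filter (fun k : Fin n → ZMod 2 => M.transpose.mulVec k = j),
      X k * (-1 : ℝ) ^ ip d k := by
  intro j
  set A := Real.sqrt ((2 ^ n : ℝ) / (2 ^ b : ℝ)) with hA
  set s := Real.sqrt ((2 : ℝ) ^ n) with hs
  have hApos : A * A = (2 ^ n : ℝ) / (2 ^ b : ℝ) := Real.mul_self_sqrt (by positivity)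
  have hspos : s * s = (2 : ℝ) ^ n := Real.mul_self_sqrt (by positivity)
  have hterm : ∀ ℓ : Fin b → ZMod 2,
      x (M.mulVec ℓ + d) * (-1 : ℝ) ^ ip j ℓ
      = (1 / s) * ∑ k : Fin n → ZMod 2,
          ((-1 : ℝ) ^ ip d k * X k) * (-1 : ℝ) ^ ip ℓ (M.transpose.mulVec k + j) := by
    intro ℓ
    rw [hx (M.mulVec ℓ + d), mul_assoc, Finset.sum_mul]
    refine congrArg _ (Finset.sum_congr rfl fun k _ => ?_)
    rw [ip_add_left, ip_mulVec, ip_add_right, ip_comm j ℓ]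
    ring
  rw [hU j, Finset.sum_congr rfl fun ℓ _ => hterm ℓ, ← Finset.mul_sum]
  rw [Finset.sum_comm]
  have hiff : ∀ k : Fin n → ZMod 2,
      M.transpose.mulVec k + j = 0 ↔ M.transpose.mulVec k = j := by
    intro k
    have h2 : ∀ u w : ZMod 2, u + w = 0 ↔ u = w := by decide
    constructor
    · intro h; funext i; exact (h2 _ _).mp (congrFun h i)
    · intro h; funext i; exact (h2 _ _).mpr (congrFun h i)
  have hinner : ∀ k : Fin n → ZMod 2,
      (∑ ℓ : Fin b → ZMod 2, ((-1 : ℝ) ^ ip d k * X k) * (-1 : ℝ) ^ ip ℓ (M.transpose.mulVec k + j))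
      = ((-1 : ℝ) ^ ip d k * X k) * (if M.transpose.mulVec k = j then (2:ℝ)^b else 0) := by
    intro k
    rw [← Finset.mul_sum, ortho]
    simp [hiff k]
  rw [Finset.sum_congr rfl fun k _ => hinner k]
  have hsplit : (∑ k : Fin n → ZMod 2,
      ((-1 : ℝ) ^ ip d k * X k) * (if M.transpose.mulVec k = j then (2:ℝ)^b else 0))
      = (2:ℝ)^b * ∑ k ∈ Finset.univ.filter (fun k : Fin n → ZMod 2 => M.transpose.mulVec k = j),
          X k * (-1 : ℝ) ^ ip d k := by
    rw [Finset.mul_sum, Finset.sum_filter]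
    refine Finset.sum_congr rfl fun k _ => ?_
    by_cases h : M.transpose.mulVec k = j <;> simp [h] <;> ring
  rw [hsplit]
  have h2b : (2:ℝ)^b ≠ 0 := by positivity
  have h2n : (2:ℝ)^n ≠ 0 := by positivity
  have hAA : A * A * ((1/s) * (1/s)) * (2:ℝ)^b = 1 := by
    rw [hApos]
    field_simp
    rw [sq, hspos]
    field_simp
  set T := ∑ k ∈ Finset.univ.filter (fun k : Fin n → ZMod 2 => M.transpose.mulVec k = j),
      X k * (-1 : ℝ) ^ ip d k with hT
  calc A * (1/s) * (A * ((1/s) * ((2:ℝ)^b * T)))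
      = (A * A * ((1/s) * (1/s)) * (2:ℝ)^b) * T := by ring
    _ = T := by rw [hAA, one_mul]
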